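/- Let σ2 > 0, B > 0, β(x) = σ2·(2^{x/B} − 1), and fix λ > 0, μ ≥ 0, α > 0, κ > 0, C > 0, R > 0, T > 0, g̃ > 0, p_c > 0. Define J(t, ℓ) = α·ℓ + λ·κ·C³·(R − ℓ)³/T² + (λ·t/g̃)·β(ℓ/t) + λ·p_c·t + μ·t on D = {(t, ℓ) : t > 0, 0 ≤ ℓ ≤ R} ∪ {(0, 0)}, with the β-term defined as 0 at (0, 0). Then for every t > 0, the point (t, R) is not a minimizer of J on D: there exists (t', ℓ') ∈ D with J(t', ℓ') < J(t, R). -/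
import Mathlib


/-- Remark 1, property 2: offloading all `R` bits is always suboptimal — for
every `t > 0`, the point `(t, R)` is not a minimizer of the Lagrangian
subproblem objective `J` on `D = {(t, ℓ) : t > 0, 0 ≤ ℓ ≤ R} ∪ {(0,0)}`. -/
theorem stmt6 (σ2 B : ℝ) (hσ2 : 0 < σ2) (hB : 0 < B)
    (β : ℝ → ℝ)
    (hβ : ∀ x, β x = σ2 * ((2 : ℝ) ^ (x / B) - 1))
    (lam μ α κ C R T gtld pc : ℝ)
    (hlam : 0 < lam) (hμ : 0 ≤ μ) (hα : 0 < α) (hκ : 0 < κ) (hC : 0 < C)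
    (hR : 0 < R) (hT : 0 < T) (hgtld : 0 < gtld) (hpc : 0 < pc)
    (J : ℝ → ℝ → ℝ)
    (hJ : ∀ t ℓ : ℝ, J t ℓ = α * ℓ + lam * κ * C ^ 3 * (R - ℓ) ^ 3 / T ^ 2
      + (if t = 0 then 0 else lam * t / gtld * β (ℓ / t)) + lam * pc * t + μ * t) :
    ∀ t : ℝ, 0 < t →
      ∃ t' ℓ' : ℝ, ((0 < t' ∧ 0 ≤ ℓ' ∧ ℓ' ≤ R) ∨ (t' = 0 ∧ ℓ' = 0)) ∧
        J t' ℓ' < J t R := by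
  intro t ht
  set A := lam * κ * C ^ 3 / T ^ 2 with hA
  have hApos : 0 < A := by positivity
  have hsq : 0 < Real.sqrt (α / A) := Real.sqrt_pos.mpr (by positivity)
  set ε := min R (Real.sqrt (α / A) / 2) with hε
  have hεpos : 0 < ε := lt_min hR (by linarith)
  have hεR : ε ≤ R := min_le_left _ _
  refine ⟨t, R - ε, Or.inl ⟨ht, by linarith, by linarith⟩, ?_⟩
  rw [hJ, hJ, if_neg ht.ne', if_neg ht.ne']
  have hcube : A * ε ^ 3 < α * ε := by
    have h1 : ε ≤ Real.sqrt (α / A) / 2 := min_le_right _ _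
    have h2 : ε ^ 2 < α / A := by
      have hle : ε ^ 2 ≤ (Real.sqrt (α / A) / 2) ^ 2 :=
        pow_le_pow_left₀ hεpos.le h1 2
      have hs : Real.sqrt (α / A) ^ 2 = α / A := Real.sq_sqrt (by positivity)
      nlinarith
    have h3 : A * ε ^ 2 < α := by
      have := mul_lt_mul_of_pos_left h2 hApos
      rwa [mul_div_cancel₀ _ hApos.ne'] at this
    nlinarith
  have hβle : β ((R - ε) / t) ≤ β (R / t) := by
    rw [hβ, hβ]
    have hexp : (2:ℝ) ^ ((R - ε) / t / B) ≤ (2:ℝ) ^ (R / t / B) := by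
      apply Real.rpow_le_rpow_of_exponent_le one_le_two
      gcongr
      linarith
    nlinarith
  have hbterm : lam * t / gtld * β ((R - ε) / t) ≤ lam * t / gtld * β (R / t) :=
    mul_le_mul_of_nonneg_left hβle (by positivity)
  have h0 : lam * κ * C ^ 3 * (R - R) ^ 3 / T ^ 2 = 0 := by ring
  have hc : lam * κ * C ^ 3 * (R - (R - ε)) ^ 3 / T ^ 2 = A * ε ^ 3 := by
    rw [hA]; ring
  rw [h0, hc]
  nlinarith
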